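/- arXiv:1307.3460 — 5 statements merged into one kernel-verified Lean document; each statement's English description precedes it below -/
import Mathlib

section
/- Let R : [0,T]² → ℝ be symmetric with R(s,t) = E[X_s X_t] for a centered Gaussian process X, and suppose the mixed (1,ρ)-variation V_{1,ρ}(R;[s,t]²) is finite for all subintervals. Then every Cameron–Martin path h (i.e. h_t = E[Z X_t] with Z in the L²-closure of span{X_t}) satisfies ‖h‖_{q-var;[s,t]} ≤ ‖h‖_H · √(V_{1,ρ}(R;[s,t]²)) where q = 1/(1/(2ρ) + 1/2). -/
open MeasureTheory ProbabilityTheory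
open scoped ENNReal NNReal

private lemma cm_mul_int {Ω : Type*} [MeasurableSpace Ω] {P : Measure Ω} {f g : Ω → ℝ}
    (hf : MemLp f 2 P) (hg : MemLp g 2 P) :
    Integrable (fun ω => f ω * g ω) P := by
  rw [← memLp_one_iff_integrable]
  have h1 : (1 : ℝ≥0∞) / 1 = 1 / 2 + 1 / 2 := by
    rw [one_div_one]; exact (ENNReal.add_halves 1).symm
  exact MemLp.smul (p := 2) (q := 2) (r := 1) hg hf

private lemma cm_cs {Ω : Type*} [MeasurableSpace Ω] {P : Measure Ω} {f g : Ω → ℝ}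
    (hf : MemLp f 2 P) (hg : MemLp g 2 P) :
    ∫ ω, f ω * g ω ∂P ≤ (∫ ω, f ω ^ 2 ∂P) ^ ((1:ℝ)/2) * (∫ ω, g ω ^ 2 ∂P) ^ ((1:ℝ)/2) := by
  have h2 : Real.HolderConjugate 2 2 := Real.HolderConjugate.two_two
  have habs : ∀ u : Ω → ℝ, MemLp u 2 P → MemLp (fun ω => |u ω|) (ENNReal.ofReal 2) P := by
    intro u hu
    have h22 : ENNReal.ofReal (2:ℝ) = 2 := by
      rw [show (2:ℝ) = ((2:ℕ):ℝ) by norm_num, ENNReal.ofReal_natCast]; norm_num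
    rw [h22]
    simpa [Real.norm_eq_abs] using hu.norm
  have key := integral_mul_le_Lp_mul_Lq_of_nonneg (μ := P) h2
    (f := fun ω => |f ω|) (g := fun ω => |g ω|)
    (Filter.Eventually.of_forall fun ω => abs_nonneg _)
    (Filter.Eventually.of_forall fun ω => abs_nonneg _) (habs f hf) (habs g hg)
  have e : ∀ u : Ω → ℝ, (∫ ω, |u ω| ^ (2:ℝ) ∂P) = ∫ ω, u ω ^ 2 ∂P := by
    intro u
    refine integral_congr_ae (Filter.Eventually.of_forall fun ω => ?_)
    show |u ω| ^ (2:ℝ) = u ω ^ 2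
    rw [show (2:ℝ) = ((2:ℕ):ℝ) by norm_num, Real.rpow_natCast, sq_abs]
  rw [e, e] at key
  refine le_trans ?_ key
  have hint : Integrable (fun ω => |f ω| * |g ω|) P :=
    cm_mul_int (by simpa [Real.norm_eq_abs] using hf.norm)
      (by simpa [Real.norm_eq_abs] using hg.norm)
  refine integral_mono (cm_mul_int hf hg) hint fun ω => ?_
  rw [← abs_mul]; exact le_abs_self _

private lemma cm_sign_sq_le_one (x : ℝ) : Real.sign x ^ 2 ≤ 1 := by
  rcases lt_trichotomy x 0 with hx | hx | hx
  · rw [Real.sign_of_neg hx]; norm_num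
  · rw [hx, Real.sign_zero]; norm_num
  · rw [Real.sign_of_pos hx]; norm_num

private lemma cm_sign_mul (x : ℝ) : Real.sign x * x = |x| := by
  rcases lt_trichotomy x 0 with hx | hx | hx
  · rw [Real.sign_of_neg hx, abs_of_neg hx]; ring
  · simp [hx]
  · rw [Real.sign_of_pos hx, abs_of_pos hx]; ring


/-- Cameron–Martin embedding under finite mixed `(1,ρ)`-variation:
`‖h‖_{q-var;[s,t]} ≤ ‖h‖_H √(V_{1,ρ}(R;[s,t]²))` with `q = 1/(1/(2ρ)+1/2)`. -/
theorem stmt0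
    (T : ℝ) (hT : 0 < T)
    {Ω : Type*} [MeasurableSpace Ω] (P : Measure Ω) [IsProbabilityMeasure P]
    (X : ℝ → Ω → ℝ)
    (hX2 : ∀ t, MemLp (X t) 2 P)
    (hcent : ∀ t, ∫ ω, X t ω ∂P = 0)
    -- `X` is a Gaussian process: every finite linear combination is a centered Gaussian
    (hGauss : ∀ (n : ℕ) (c : Fin n → ℝ) (τ : Fin n → ℝ),
      ∃ v : NNReal, Measure.map (fun ω => ∑ i, c i * X (τ i) ω) P = gaussianReal 0 v)
    (R : ℝ → ℝ → ℝ)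
    (hR : ∀ s t, R s t = ∫ ω, X s ω * X t ω ∂P)
    (ρ : ℝ) (hρ : 1 ≤ ρ)
    -- `V s t` dominates the mixed (1,ρ)-variation of `R` over `[s,t]²`
    (V : ℝ → ℝ → ℝ)
    (hV : ∀ s t, 0 ≤ s → s ≤ t → t ≤ T →
      ∀ (m : ℕ) (D : Fin (m + 1) → ℝ) (m' : ℕ) (D' : Fin (m' + 1) → ℝ),
        Monotone D → D 0 = s → D (Fin.last m) = t →
        Monotone D' → D' 0 = s → D' (Fin.last m') = t →
        (∑ j : Fin m', (∑ i : Fin m,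
            |R (D i.castSucc) (D' j.castSucc) - R (D i.castSucc) (D' j.succ)
              - R (D i.succ) (D' j.castSucc) + R (D i.succ) (D' j.succ)|) ^ ρ) ^ (1 / ρ)
          ≤ V s t)
    -- Cameron–Martin path: `h t = E[Z X_t]`, `Z` in the `L²`-closure of the span of the `X_t`
    (Z : Ω → ℝ) (hZ2 : MemLp Z 2 P)
    (hZspan : ∀ ε > (0:ℝ), ∃ (n : ℕ) (c : Fin n → ℝ) (τ : Fin n → ℝ),
      ∫ ω, (Z ω - ∑ i, c i * X (τ i) ω) ^ 2 ∂P < ε)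
    (h : ℝ → ℝ) (hh : ∀ t, h t = ∫ ω, Z ω * X t ω ∂P)
    (q : ℝ) (hq : q = 1 / (1 / (2 * ρ) + 1 / 2)) :
    ∀ s t, 0 ≤ s → s ≤ t → t ≤ T →
      ∀ (m : ℕ) (D : Fin (m + 1) → ℝ),
        Monotone D → D 0 = s → D (Fin.last m) = t →
        (∑ j : Fin m, |h (D j.succ) - h (D j.castSucc)| ^ q) ^ (1 / q)
          ≤ (∫ ω, Z ω ^ 2 ∂P) ^ ((1:ℝ) / 2) * Real.sqrt (V s t) := by
  intro s t hs hst htT m D hD hD0 hDl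
  have hρ0 : (0:ℝ) < ρ := lt_of_lt_of_le one_pos hρ
  have hqval : q = 2 * ρ / (ρ + 1) := by
    rw [hq, show 1 / (2 * ρ) + 1 / 2 = (ρ + 1) / (2 * ρ) by
      field_simp; ring, one_div_div]
  have hq0 : (0:ℝ) < q := by rw [hqval]; positivity
  -- abbreviations
  set K : ℝ := (∫ ω, Z ω ^ 2 ∂P) ^ ((1:ℝ)/2) with hK
  have hK0 : 0 ≤ K := Real.rpow_nonneg (integral_nonneg fun ω => sq_nonneg _) _
  set ΔX : Fin m → Ω → ℝ := fun j ω => X (D j.succ) ω - X (D j.castSucc) ω with hΔX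
  have hΔ2 : ∀ j, MemLp (ΔX j) 2 P := fun j => (hX2 _).sub (hX2 _)
  set a : Fin m → ℝ := fun j => h (D j.succ) - h (D j.castSucc) with ha
  set β : Fin m → ℝ := fun j => Real.sign (a j) * |a j| ^ (q - 1) with hβ
  set G : Fin m → Fin m → ℝ := fun i j => ∫ ω, ΔX i ω * ΔX j ω ∂P with hG
  have hGsym : ∀ i j, G i j = G j i := by
    intro i j
    exact integral_congr_ae (Filter.Eventually.of_forall fun ω => mul_comm _ _)
  have hGR : ∀ i j, G i j
      = R (D i.castSucc) (D j.castSucc) - R (D i.castSucc) (D j.succ)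
        - R (D i.succ) (D j.castSucc) + R (D i.succ) (D j.succ) := by
    intro i j
    have e : G i j = ∫ ω,
        (X (D i.succ) ω * X (D j.succ) ω - X (D i.succ) ω * X (D j.castSucc) ω)
        - (X (D i.castSucc) ω * X (D j.succ) ω - X (D i.castSucc) ω * X (D j.castSucc) ω) ∂P := by
      simp only [hG]; congr 1; funext ω; simp only [hΔX]; ring
    have i1 : ∀ u v : ℝ, Integrable (fun ω => X u ω * X v ω) P :=
      fun u v => cm_mul_int (hX2 u) (hX2 v)
    rw [e,
      integral_sub
        (f := fun ω => X (D i.succ) ω * X (D j.succ) ω - X (D i.succ) ω * X (D j.castSucc) ω)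
        (g := fun ω => X (D i.castSucc) ω * X (D j.succ) ω - X (D i.castSucc) ω * X (D j.castSucc) ω)
        ((i1 _ _).sub (i1 _ _)) ((i1 _ _).sub (i1 _ _)),
      integral_sub (f := fun ω => X (D i.succ) ω * X (D j.succ) ω)
        (g := fun ω => X (D i.succ) ω * X (D j.castSucc) ω) (i1 _ _) (i1 _ _),
      integral_sub (f := fun ω => X (D i.castSucc) ω * X (D j.succ) ω)
        (g := fun ω => X (D i.castSucc) ω * X (D j.castSucc) ω) (i1 _ _) (i1 _ _),
      hR, hR, hR, hR]
    ring
  set r : Fin m → ℝ := fun j => ∑ i, |G i j| with hr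
  have hr0 : ∀ j, 0 ≤ r j := fun j => Finset.sum_nonneg fun i _ => abs_nonneg _
  set U : ℝ := ∑ j, |a j| ^ q with hU
  have hU0 : 0 ≤ U := Finset.sum_nonneg fun j _ => Real.rpow_nonneg (abs_nonneg _) _
  -- V is nonnegative and dominates the mixed variation of our dissection
  have hVge : (∑ j : Fin m, (r j) ^ ρ) ^ (1/ρ) ≤ V s t := by
    have := hV s t hs hst htT m D m D hD hD0 hDl hD hD0 hDl
    simpa only [hr, ← hGR] using this
  have hV0 : 0 ≤ V s t :=
    le_trans (Real.rpow_nonneg (Finset.sum_nonneg fun j _ =>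
      Real.rpow_nonneg (hr0 j) _) _) hVge
  have hρne : ρ ≠ 0 := hρ0.ne'
  have hρp1 : ρ + 1 ≠ 0 := by positivity
  -- facts about β
  have hβa : ∀ j, β j * a j = |a j| ^ q := by
    intro j
    by_cases h0 : a j = 0
    · simp [hβ, h0, Real.zero_rpow hq0.ne']
    · have habsp : (0:ℝ) < |a j| := abs_pos.2 h0
      calc β j * a j = |a j| ^ (q-1) * (Real.sign (a j) * a j) := by rw [hβ]; ring
        _ = |a j| ^ (q-1) * |a j| ^ (1:ℝ) := by rw [cm_sign_mul, Real.rpow_one]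
        _ = |a j| ^ q := by rw [← Real.rpow_add habsp]; norm_num
  set α : ℝ := (ρ - 1) / ρ with hα
  have hβsq : ∀ j, β j ^ 2 ≤ (|a j| ^ q) ^ α := by
    intro j
    have h1 : β j ^ 2 = Real.sign (a j) ^ 2 * (|a j| ^ (q-1)) ^ 2 := by rw [hβ]; ring
    have h2 : (|a j| ^ (q-1)) ^ 2 = (|a j| ^ q) ^ α := by
      rw [← Real.rpow_natCast (|a j| ^ (q-1)) 2, ← Real.rpow_mul (abs_nonneg _),
          ← Real.rpow_mul (abs_nonneg _)]
      congr 1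
      push_cast
      rw [hqval, hα]
      field_simp
      ring
    calc β j ^ 2 = Real.sign (a j) ^ 2 * (|a j| ^ (q-1)) ^ 2 := h1
      _ ≤ 1 * (|a j| ^ (q-1)) ^ 2 :=
          mul_le_mul_of_nonneg_right (cm_sign_sq_le_one _) (sq_nonneg _)
      _ = (|a j| ^ q) ^ α := by rw [one_mul, h2]
  set Y : Ω → ℝ := fun ω => ∑ j, β j * ΔX j ω with hY
  have hY2 : MemLp Y 2 P :=
    memLp_finset_sum _ fun j _ => (hΔ2 j).const_mul (β j)
  have hZInt : ∀ j, Integrable (fun ω => Z ω * ΔX j ω) P := fun j => cm_mul_int hZ2 (hΔ2 j)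
  have ha' : ∀ j, ∫ ω, Z ω * ΔX j ω ∂P = a j := by
    intro j
    have e : (fun ω => Z ω * ΔX j ω)
        = fun ω => Z ω * X (D j.succ) ω - Z ω * X (D j.castSucc) ω := by
      funext ω; simp only [hΔX]; ring
    rw [e, integral_sub (f := fun ω => Z ω * X (D j.succ) ω)
        (g := fun ω => Z ω * X (D j.castSucc) ω)
        (cm_mul_int hZ2 (hX2 _)) (cm_mul_int hZ2 (hX2 _))]
    simp only [ha]
    rw [hh, hh]
  have stepA : ∫ ω, Z ω * Y ω ∂P = U := by
    have e : (fun ω => Z ω * Y ω) = fun ω => ∑ j, β j * (Z ω * ΔX j ω) := by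
      funext ω; simp only [hY, Finset.mul_sum]
      exact Finset.sum_congr rfl fun j _ => by ring
    rw [e, integral_finset_sum _ (fun j _ => (hZInt j).const_mul (β j)), hU]
    refine Finset.sum_congr rfl fun j _ => ?_
    rw [integral_const_mul, ha' j, hβa j]
  have stepC : ∫ ω, Y ω ^ 2 ∂P = ∑ j, ∑ k, (β j * β k) * G j k := by
    have e : (fun ω => Y ω ^ 2)
        = fun ω => ∑ j, ∑ k, (β j * β k) * (ΔX j ω * ΔX k ω) := by
      funext ω
      simp only [hY, sq, Finset.sum_mul_sum]
      exact Finset.sum_congr rfl fun j _ => Finset.sum_congr rfl fun k _ => by ring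
    rw [e, integral_finset_sum _ (fun j _ => integrable_finset_sum _
      (fun k _ => (cm_mul_int (hΔ2 j) (hΔ2 k)).const_mul (β j * β k)))]
    refine Finset.sum_congr rfl fun j _ => ?_
    rw [integral_finset_sum _ (fun k _ => (cm_mul_int (hΔ2 j) (hΔ2 k)).const_mul (β j * β k))]
    refine Finset.sum_congr rfl fun k _ => ?_
    rw [integral_const_mul]
  have stepE : ∑ j, ∑ k, (β j * β k) * G j k ≤ ∑ j, β j ^ 2 * r j := by
    have term : ∀ j k, (β j * β k) * G j k
        ≤ β j ^ 2 / 2 * |G j k| + β k ^ 2 / 2 * |G j k| := by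
      intro j k
      have h1 : (β j * β k) * G j k ≤ |β j * β k| * |G j k| := by
        rw [← abs_mul]; exact le_abs_self _
      have h2 : |β j * β k| ≤ β j ^ 2 / 2 + β k ^ 2 / 2 := by
        rw [abs_mul]
        nlinarith [sq_abs (β j), sq_abs (β k), sq_nonneg (|β j| - |β k|),
          abs_nonneg (β j), abs_nonneg (β k)]
      nlinarith [mul_le_mul_of_nonneg_right h2 (abs_nonneg (G j k))]
    calc ∑ j, ∑ k, (β j * β k) * G j k
        ≤ ∑ j, ∑ k, (β j ^ 2 / 2 * |G j k| + β k ^ 2 / 2 * |G j k|) :=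
          Finset.sum_le_sum fun j _ => Finset.sum_le_sum fun k _ => term j k
      _ = (∑ j, ∑ k, β j ^ 2 / 2 * |G j k|) + (∑ j, ∑ k, β k ^ 2 / 2 * |G j k|) := by
          rw [← Finset.sum_add_distrib]
          exact Finset.sum_congr rfl fun j _ => Finset.sum_add_distrib
      _ = (∑ j, β j ^ 2 / 2 * r j) + (∑ k, β k ^ 2 / 2 * r k) := by
          congr 1
          · refine Finset.sum_congr rfl fun j _ => ?_
            rw [← Finset.mul_sum]
            congr 1
            refine Finset.sum_congr rfl fun k _ => ?_
            rw [hGsym j k]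
          · rw [Finset.sum_comm]
            refine Finset.sum_congr rfl fun k _ => ?_
            rw [← Finset.mul_sum]
      _ = ∑ j, β j ^ 2 * r j := by
          rw [← Finset.sum_add_distrib]
          exact Finset.sum_congr rfl fun j _ => by ring
  have stepF : ∑ j, β j ^ 2 * r j ≤ ∑ j, (|a j| ^ q) ^ α * r j :=
    Finset.sum_le_sum fun j _ => mul_le_mul_of_nonneg_right (hβsq j) (hr0 j)
  have stepG : ∑ j, (|a j| ^ q) ^ α * r j ≤ U ^ α * V s t := by
    rcases eq_or_lt_of_le hρ with hρ1 | hρ1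
    · have hα0 : α = 0 := by rw [hα, ← hρ1]; norm_num
      simp only [hα0, Real.rpow_zero, one_mul]
      have hr1 : ∑ j : Fin m, r j ≤ V s t := by
        have h' := hVge
        rw [← hρ1] at h'
        simpa using h'
      simpa using hr1
    · have hρm : (0:ℝ) < ρ - 1 := by linarith
      have hconj : Real.HolderConjugate (ρ/(ρ-1)) ρ := by
        rw [Real.holderConjugate_iff]
        constructor
        · exact (one_lt_div hρm).2 (by linarith)
        · rw [inv_div]
          field_simp
          ring
      have hold := Real.inner_le_Lp_mul_Lq_of_nonneg (s := Finset.univ) hconj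
        (f := fun j : Fin m => (|a j| ^ q) ^ α) (g := r)
        (fun j _ => Real.rpow_nonneg (Real.rpow_nonneg (abs_nonneg _) _) _)
        (fun j _ => hr0 j)
      have e2 : (∑ j : Fin m, ((|a j| ^ q) ^ α) ^ (ρ/(ρ-1))) = U := by
        rw [hU]
        refine Finset.sum_congr rfl fun j _ => ?_
        rw [← Real.rpow_mul (Real.rpow_nonneg (abs_nonneg _) _),
            show α * (ρ/(ρ-1)) = 1 by rw [hα]; field_simp, Real.rpow_one]
      calc ∑ j, (|a j| ^ q) ^ α * r j
          ≤ (∑ j : Fin m, ((|a j| ^ q) ^ α) ^ (ρ/(ρ-1))) ^ (1/(ρ/(ρ-1)))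
            * (∑ j : Fin m, r j ^ ρ) ^ (1/ρ) := hold
        _ = U ^ α * (∑ j : Fin m, r j ^ ρ) ^ (1/ρ) := by rw [e2, one_div_div, ← hα]
        _ ≤ U ^ α * V s t := mul_le_mul_of_nonneg_left hVge (Real.rpow_nonneg hU0 _)
  have hYsq : ∫ ω, Y ω ^ 2 ∂P ≤ U ^ α * V s t :=
    stepC ▸ (stepE.trans (stepF.trans stepG))
  have main : U ≤ K * (U ^ α * V s t) ^ ((1:ℝ)/2) := by
    have cs := cm_cs hZ2 hY2
    rw [stepA] at cs
    refine cs.trans ?_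
    refine mul_le_mul_of_nonneg_left ?_ hK0
    exact Real.rpow_le_rpow (integral_nonneg fun ω => sq_nonneg _) hYsq (by norm_num)
  have hsplit : (U ^ α * V s t) ^ ((1:ℝ)/2) = U ^ (α/2) * (V s t) ^ ((1:ℝ)/2) := by
    rw [Real.mul_rpow (Real.rpow_nonneg hU0 _) hV0, ← Real.rpow_mul hU0, mul_one_div]
  suffices hfin : U ^ (1/q) ≤ K * Real.sqrt (V s t) by
    simpa only [hU, ha] using hfin
  rw [Real.sqrt_eq_rpow]
  rcases eq_or_lt_of_le hU0 with hUz | hUp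
  · rw [← hUz, Real.zero_rpow (one_div_pos.2 hq0).ne']
    exact mul_nonneg hK0 (Real.rpow_nonneg hV0 _)
  · have hq_id : 1/q = 1 - α/2 := by
      rw [hqval, hα]
      field_simp
      ring
    rw [hq_id, Real.rpow_sub hUp, Real.rpow_one, div_le_iff₀ (Real.rpow_pos_of_pos hUp _)]
    calc U ≤ K * (U ^ α * V s t) ^ ((1:ℝ)/2) := main
      _ = K * (V s t) ^ ((1:ℝ)/2) * U ^ (α/2) := by rw [hsplit]; ring
end

section
/- Let R : [0,T]² → ℝ be symmetric and continuous, μ₋ a finite nonnegative Borel measure on [0,T]², and suppose: (i) for every rectangle A = [s,t]×[u,v] ⊆ [0,T]² one has the rectangular increment bound R(A) ≥ -μ₋(A), and (ii) R(A) + μ₋(A) ≥ 0 for all rectangles A. Then the 1-variation of R over any rectangle A satisfies V₁(R;A) ≤ R(A) + 2μ₋(A), where R(A) denotes the rectangular increment R(s,u) - R(s,v) - R(t,u) + R(t,v). -/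
open MeasureTheory Filter Topology

/-- Telescoping sum over a `Fin` dissection. -/
lemma tele_sum (n : ℕ) (f : Fin (n + 1) → ℝ) :
    ∑ j : Fin n, (f j.castSucc - f j.succ) = f 0 - f (Fin.last n) := by
  induction n with
  | zero => simp
  | succ n ih =>
    rw [Fin.sum_univ_castSucc]
    have := ih (fun j => f j.castSucc)
    simp only [Fin.succ_castSucc] at this ⊢
    rw [this]
    have h1 : ((Fin.last n).castSucc : Fin (n + 2)) = (Fin.last n).castSucc := rfl
    have h2 : ((Fin.last n).succ : Fin (n + 2)) = Fin.last (n + 1) := by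
      simp [Fin.ext_iff]
    rw [h2]
    simp only [Fin.castSucc_zero]
    ring

/-- From the closed-rectangle lower bound and continuity, deduce the lower bound with the
half-open rectangle measure. -/
lemma key_lower (T : ℝ) (R : ℝ → ℝ → ℝ)
    (hcont : ContinuousOn (fun p : ℝ × ℝ => R p.1 p.2) (Set.Icc 0 T ×ˢ Set.Icc 0 T))
    (μ : Measure (ℝ × ℝ)) [IsFiniteMeasure μ]
    (hlow : ∀ s t u v : ℝ, 0 ≤ s → s ≤ t → t ≤ T → 0 ≤ u → u ≤ v → v ≤ T →
      -(μ (Set.Icc s t ×ˢ Set.Icc u v)).toReal ≤ R s u - R s v - R t u + R t v) :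
    ∀ s t u v : ℝ, 0 ≤ s → s ≤ t → t ≤ T → 0 ≤ u → u ≤ v → v ≤ T →
      -(μ (Set.Ioc s t ×ˢ Set.Ioc u v)).toReal ≤ R s u - R s v - R t u + R t v := by
  intro s t u v hs hst ht hu huv hv
  rcases eq_or_lt_of_le hst with rfl | hst'
  · simp
  rcases eq_or_lt_of_le huv with rfl | huv'
  · simp
  set ε : ℝ := min (t - s) (v - u) with hε
  have hε0 : 0 < ε := lt_min (by linarith) (by linarith)
  have hεs : ε ≤ t - s := min_le_left _ _
  have hεu : ε ≤ v - u := min_le_right _ _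
  have hev : ∀ᶠ δ in 𝓝[>] (0 : ℝ),
      -(μ (Set.Ioc s t ×ˢ Set.Ioc u v)).toReal
        ≤ R (s + δ) (u + δ) - R (s + δ) v - R t (u + δ) + R t v := by
    filter_upwards [Ioo_mem_nhdsGT_of_mem (Set.left_mem_Ico.mpr hε0)] with δ hδ
    obtain ⟨hδ0, hδε⟩ := hδ
    have h1 : Set.Icc (s + δ) t ×ˢ Set.Icc (u + δ) v ⊆ Set.Ioc s t ×ˢ Set.Ioc u v := by
      apply Set.prod_mono
      · exact fun x hx => ⟨by linarith [hx.1], hx.2⟩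
      · exact fun x hx => ⟨by linarith [hx.1], hx.2⟩
    have hmono : (μ (Set.Icc (s + δ) t ×ˢ Set.Icc (u + δ) v)).toReal
        ≤ (μ (Set.Ioc s t ×ˢ Set.Ioc u v)).toReal :=
      ENNReal.toReal_mono (measure_ne_top μ _) (measure_mono h1)
    have hl := hlow (s + δ) t (u + δ) v (by linarith) (by linarith) ht
      (by linarith) (by linarith) hv
    linarith
  have hmem : ∀ δ ∈ Set.Ioo (0 : ℝ) ε,
      (s + δ ∈ Set.Icc (0 : ℝ) T) ∧ (u + δ ∈ Set.Icc (0 : ℝ) T) := by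
    intro δ hδ
    constructor
    · exact ⟨by linarith [hδ.1], by linarith [hδ.2]⟩
    · exact ⟨by linarith [hδ.1], by linarith [hδ.2]⟩
  have hsmem : ((s, u) : ℝ × ℝ) ∈ Set.Icc (0:ℝ) T ×ˢ Set.Icc (0:ℝ) T :=
    ⟨⟨hs, by linarith⟩, ⟨hu, by linarith⟩⟩
  have hsvmem : ((s, v) : ℝ × ℝ) ∈ Set.Icc (0:ℝ) T ×ˢ Set.Icc (0:ℝ) T :=
    ⟨⟨hs, by linarith⟩, ⟨by linarith, hv⟩⟩
  have htumem : ((t, u) : ℝ × ℝ) ∈ Set.Icc (0:ℝ) T ×ˢ Set.Icc (0:ℝ) T :=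
    ⟨⟨by linarith, ht⟩, ⟨hu, by linarith⟩⟩
  have hc1 : Tendsto (fun δ : ℝ => R (s + δ) (u + δ)) (𝓝[>] 0) (𝓝 (R s u)) := by
    have h0 : Tendsto (fun δ : ℝ => ((s + δ, u + δ) : ℝ × ℝ)) (𝓝[>] 0)
        (𝓝[Set.Icc (0:ℝ) T ×ˢ Set.Icc (0:ℝ) T] (s, u)) := by
      rw [tendsto_nhdsWithin_iff]
      constructor
      · have : Tendsto (fun δ : ℝ => ((s + δ, u + δ) : ℝ × ℝ)) (𝓝 0) (𝓝 (s + 0, u + 0)) :=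
          ((continuous_const.add continuous_id).prodMk
            (continuous_const.add continuous_id)).tendsto 0
        simpa using this.mono_left nhdsWithin_le_nhds
      · filter_upwards [Ioo_mem_nhdsGT_of_mem (Set.left_mem_Ico.mpr hε0)] with δ hδ
        exact ⟨(hmem δ hδ).1, (hmem δ hδ).2⟩
    exact ((hcont _ hsmem).tendsto).comp h0
  have hc2 : Tendsto (fun δ : ℝ => R (s + δ) v) (𝓝[>] 0) (𝓝 (R s v)) := by
    have h0 : Tendsto (fun δ : ℝ => ((s + δ, v) : ℝ × ℝ)) (𝓝[>] 0)
        (𝓝[Set.Icc (0:ℝ) T ×ˢ Set.Icc (0:ℝ) T] (s, v)) := by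
      rw [tendsto_nhdsWithin_iff]
      constructor
      · have : Tendsto (fun δ : ℝ => ((s + δ, v) : ℝ × ℝ)) (𝓝 0) (𝓝 (s + 0, v)) :=
          ((continuous_const.add continuous_id).prodMk continuous_const).tendsto 0
        simpa using this.mono_left nhdsWithin_le_nhds
      · filter_upwards [Ioo_mem_nhdsGT_of_mem (Set.left_mem_Ico.mpr hε0)] with δ hδ
        exact ⟨(hmem δ hδ).1, ⟨by linarith, hv⟩⟩
    exact ((hcont _ hsvmem).tendsto).comp h0
  have hc3 : Tendsto (fun δ : ℝ => R t (u + δ)) (𝓝[>] 0) (𝓝 (R t u)) := by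
    have h0 : Tendsto (fun δ : ℝ => ((t, u + δ) : ℝ × ℝ)) (𝓝[>] 0)
        (𝓝[Set.Icc (0:ℝ) T ×ˢ Set.Icc (0:ℝ) T] (t, u)) := by
      rw [tendsto_nhdsWithin_iff]
      constructor
      · have : Tendsto (fun δ : ℝ => ((t, u + δ) : ℝ × ℝ)) (𝓝 0) (𝓝 (t, u + 0)) :=
          (continuous_const.prodMk (continuous_const.add continuous_id)).tendsto 0
        simpa using this.mono_left nhdsWithin_le_nhds
      · filter_upwards [Ioo_mem_nhdsGT_of_mem (Set.left_mem_Ico.mpr hε0)] with δ hδ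
        exact ⟨⟨by linarith, ht⟩, (hmem δ hδ).2⟩
    exact ((hcont _ htumem).tendsto).comp h0
  have htend : Tendsto (fun δ : ℝ => R (s + δ) (u + δ) - R (s + δ) v - R t (u + δ) + R t v)
      (𝓝[>] 0) (𝓝 (R s u - R s v - R t u + R t v)) :=
    ((hc1.sub hc2).sub hc3).add tendsto_const_nhds
  exact ge_of_tendsto htend hev

/-- Theorem (Part A): if all rectangular increments of `R` are bounded below by `-μ₋`
of the rectangle, then `V₁(R;A) ≤ R(A) + 2μ₋(A)` for every rectangle `A`. -/
theorem stmt4 (T : ℝ) (hT : 0 < T) (R : ℝ → ℝ → ℝ)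
    (hcont : ContinuousOn (fun p : ℝ × ℝ => R p.1 p.2) (Set.Icc 0 T ×ˢ Set.Icc 0 T))
    (hsymm : ∀ s t, R s t = R t s)
    (μ : Measure (ℝ × ℝ)) [IsFiniteMeasure μ]
    (hlow : ∀ s t u v : ℝ, 0 ≤ s → s ≤ t → t ≤ T → 0 ≤ u → u ≤ v → v ≤ T →
      -(μ (Set.Icc s t ×ˢ Set.Icc u v)).toReal ≤ R s u - R s v - R t u + R t v) :
    ∀ s t u v : ℝ, 0 ≤ s → s ≤ t → t ≤ T → 0 ≤ u → u ≤ v → v ≤ T →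
      ∀ (m : ℕ) (D : Fin (m + 1) → ℝ) (m' : ℕ) (D' : Fin (m' + 1) → ℝ),
        Monotone D → D 0 = s → D (Fin.last m) = t →
        Monotone D' → D' 0 = u → D' (Fin.last m') = v →
        ∑ i : Fin m, ∑ j : Fin m',
          |R (D i.castSucc) (D' j.castSucc) - R (D i.castSucc) (D' j.succ)
            - R (D i.succ) (D' j.castSucc) + R (D i.succ) (D' j.succ)|
          ≤ (R s u - R s v - R t u + R t v)
            + 2 * (μ (Set.Icc s t ×ˢ Set.Icc u v)).toReal := by
  intro s t u v hs hst ht hu huv hv m D m' D' hD hD0 hDl hD' hD'0 hD'l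
  have hkey := key_lower T R hcont μ hlow
  have hDs : ∀ i : Fin (m + 1), s ≤ D i := fun i => hD0 ▸ hD (Fin.zero_le i)
  have hDt : ∀ i : Fin (m + 1), D i ≤ t := fun i => hDl ▸ hD (Fin.le_last i)
  have hD's : ∀ j : Fin (m' + 1), u ≤ D' j := fun j => hD'0 ▸ hD' (Fin.zero_le j)
  have hD't : ∀ j : Fin (m' + 1), D' j ≤ v := fun j => hD'l ▸ hD' (Fin.le_last j)
  set x : Fin m → Fin m' → ℝ := fun i j =>
    R (D i.castSucc) (D' j.castSucc) - R (D i.castSucc) (D' j.succ)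
      - R (D i.succ) (D' j.castSucc) + R (D i.succ) (D' j.succ) with hx
  set B : Fin m × Fin m' → Set (ℝ × ℝ) := fun p =>
    Set.Ioc (D p.1.castSucc) (D p.1.succ) ×ˢ Set.Ioc (D' p.2.castSucc) (D' p.2.succ) with hB
  -- Step 1: pointwise bound
  have step1 : ∀ i j, |x i j| ≤ x i j + 2 * (μ (B (i, j))).toReal := by
    intro i j
    have hk := hkey (D i.castSucc) (D i.succ) (D' j.castSucc) (D' j.succ)
      (le_trans hs (hDs _)) (hD (Fin.castSucc_lt_succ (i := i)).le) (le_trans (hDt _) ht)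
      (le_trans hu (hD's _)) (hD' (Fin.castSucc_lt_succ (i := j)).le) (le_trans (hD't _) hv)
    have hnn : 0 ≤ (μ (B (i, j))).toReal := ENNReal.toReal_nonneg
    rcases abs_cases (x i j) with ⟨he, _⟩ | ⟨he, _⟩ <;>
      · rw [he]; simp only [hx, hB] at *; linarith
  -- Step 2: telescoping of the signed sum
  have hinner : ∀ i : Fin m, ∑ j : Fin m', x i j
      = (R (D i.castSucc) u - R (D i.succ) u) - (R (D i.castSucc) v - R (D i.succ) v) := by
    intro i
    have h := tele_sum m' (fun j => R (D i.castSucc) (D' j) - R (D i.succ) (D' j))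
    have h2 : ∑ j : Fin m', x i j = ∑ j : Fin m',
        ((fun j => R (D i.castSucc) (D' j) - R (D i.succ) (D' j)) j.castSucc
          - (fun j => R (D i.castSucc) (D' j) - R (D i.succ) (D' j)) j.succ) := by
      apply Finset.sum_congr rfl
      intro j _
      simp only [hx]; ring
    rw [h2, h, hD'0, hD'l]
  have hsum : ∑ i : Fin m, ∑ j : Fin m', x i j = R s u - R s v - R t u + R t v := by
    have h := tele_sum m (fun i => R (D i) u - R (D i) v)
    have h2 : ∑ i : Fin m, ∑ j : Fin m', x i j = ∑ i : Fin m,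
        ((fun i => R (D i) u - R (D i) v) i.castSucc
          - (fun i => R (D i) u - R (D i) v) i.succ) := by
      apply Finset.sum_congr rfl
      intro i _
      rw [hinner i]; ring
    rw [h2, h, hD0, hDl]; ring
  -- Step 3: measure bound
  have hdisj : ((Finset.univ : Finset (Fin m × Fin m')) : Set (Fin m × Fin m')).PairwiseDisjoint B := by
    intro p _ q _ hpq
    have hIoc : ∀ (n : ℕ) (f : Fin (n + 1) → ℝ), Monotone f → ∀ i j : Fin n, i ≠ j →
        Disjoint (Set.Ioc (f i.castSucc) (f i.succ)) (Set.Ioc (f j.castSucc) (f j.succ)) := by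
      intro n f hf i j hij
      rcases hij.lt_or_gt with h | h
      · refine Set.Ioc_disjoint_Ioc.mpr ?_
        have : f i.succ ≤ f j.castSucc := hf (Fin.succ_le_castSucc_iff.mpr h)
        exact le_trans (min_le_left _ _) (le_trans this (le_max_right _ _))
      · refine Set.Ioc_disjoint_Ioc.mpr ?_
        have : f j.succ ≤ f i.castSucc := hf (Fin.succ_le_castSucc_iff.mpr h)
        exact le_trans (min_le_right _ _) (le_trans this (le_max_left _ _))
    have hne : p.1 ≠ q.1 ∨ p.2 ≠ q.2 := by
      by_contra hc
      push_neg at hc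
      exact hpq (Prod.ext hc.1 hc.2)
    rcases hne with h | h
    · exact Set.Disjoint.set_prod_left (hIoc m D hD p.1 q.1 h) _ _
    · exact Set.Disjoint.set_prod_right (hIoc m' D' hD' p.2 q.2 h) _ _
  have hmeasle : ∑ p : Fin m × Fin m', μ (B p) ≤ μ (Set.Icc s t ×ˢ Set.Icc u v) := by
    rw [← measure_biUnion_finset hdisj
      (fun p _ => measurableSet_Ioc.prod measurableSet_Ioc)]
    apply measure_mono
    simp only [Set.iUnion_subset_iff]
    intro p _
    apply Set.prod_mono
    · exact fun z hz => ⟨le_trans (hDs _) hz.1.le, le_trans hz.2 (hDt _)⟩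
    · exact fun z hz => ⟨le_trans (hD's _) hz.1.le, le_trans hz.2 (hD't _)⟩
  have hmeas : ∑ i : Fin m, ∑ j : Fin m', (μ (B (i, j))).toReal
      ≤ (μ (Set.Icc s t ×ˢ Set.Icc u v)).toReal := by
    rw [← Finset.sum_product']
    calc ∑ p ∈ Finset.univ ×ˢ Finset.univ, (μ (B (p.1, p.2))).toReal
        = (∑ p ∈ Finset.univ ×ˢ Finset.univ, μ (B (p.1, p.2))).toReal :=
          (ENNReal.toReal_sum (fun p _ => measure_ne_top μ _)).symm
      _ ≤ (μ (Set.Icc s t ×ˢ Set.Icc u v)).toReal := by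
          apply ENNReal.toReal_mono (measure_ne_top μ _)
          calc ∑ p ∈ Finset.univ ×ˢ Finset.univ, μ (B (p.1, p.2))
              = ∑ p : Fin m × Fin m', μ (B p) := by
                apply Finset.sum_congr rfl; intro p _; rfl
            _ ≤ _ := hmeasle
  -- Combine
  calc ∑ i : Fin m, ∑ j : Fin m', |x i j|
      ≤ ∑ i : Fin m, ∑ j : Fin m', (x i j + 2 * (μ (B (i, j))).toReal) :=
        Finset.sum_le_sum fun i _ => Finset.sum_le_sum fun j _ => step1 i j
    _ = (∑ i : Fin m, ∑ j : Fin m', x i j)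
        + 2 * ∑ i : Fin m, ∑ j : Fin m', (μ (B (i, j))).toReal := by
        simp [Finset.sum_add_distrib, Finset.mul_sum]
    _ ≤ (R s u - R s v - R t u + R t v)
        + 2 * (μ (Set.Icc s t ×ˢ Set.Icc u v)).toReal := by
        rw [hsum]; linarith
end

section
/- Let R : I² → ℝ be continuous and symmetric, and suppose that for all off-diagonal rectangles (s,t)×(u,v) ⊆ I² with t ≤ u the rectangular increment satisfies R([s,t]×[u,v]) ≤ 0. Then for all [u,v] ⊆ [s,t] ⊆ I, the rectangular increment satisfies R([s,t]×[u,v]) ≤ σ²(u,v), where σ²(u,v) = R(u,u) + R(v,v) - 2R(u,v). -/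
/-- Rectangular increment of a two-parameter function over `[a,b] × [c,d]`. -/
def rectInc (R : ℝ → ℝ → ℝ) (a b c d : ℝ) : ℝ := R a c - R a d - R b c + R b d

/-- If all off-diagonal rectangular increments of a continuous symmetric `R` are `≤ 0`, then
`R([s,t]×[u,v]) ≤ σ²(u,v)` for all `[u,v] ⊆ [s,t] ⊆ I`. -/
theorem stmt6 (a b : ℝ) (hab : a ≤ b) (R : ℝ → ℝ → ℝ)
    (hcont : ContinuousOn (fun p : ℝ × ℝ => R p.1 p.2) (Set.Icc a b ×ˢ Set.Icc a b))
    (hsymm : ∀ s ∈ Set.Icc a b, ∀ t ∈ Set.Icc a b, R s t = R t s)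
    (hoff : ∀ s t u v : ℝ, a ≤ s → s ≤ t → t ≤ u → u ≤ v → v ≤ b →
      rectInc R s t u v ≤ 0) :
    ∀ s u v t : ℝ, a ≤ s → s ≤ u → u ≤ v → v ≤ t → t ≤ b →
      rectInc R s t u v ≤ R u u + R v v - 2 * R u v := by
  intro s u v t has hsu huv hvt htb
  have hau : a ≤ u := has.trans hsu
  have hub : u ≤ b := (huv.trans hvt).trans htb
  have hvb : v ≤ b := hvt.trans htb
  have h1 : rectInc R s u u v ≤ 0 := hoff s u u v has hsu le_rfl huv hvb
  have h2 : rectInc R u v v t ≤ 0 := hoff u v v t hau huv le_rfl hvt htb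
  have e1 : R v u = R u v := hsymm v ⟨hau.trans huv, hvb⟩ u ⟨hau, hub⟩
  have e2 : R t u = R u t := hsymm t ⟨hau.trans (huv.trans hvt), htb⟩ u ⟨hau, hub⟩
  have e3 : R t v = R v t := hsymm t ⟨hau.trans (huv.trans hvt), htb⟩ v ⟨hau.trans huv, hvb⟩
  simp only [rectInc] at *
  linarith
end

section
/- Let μ be a finite signed Borel measure on the circle S¹ = ℝ/2πℤ with total variation ‖μ‖_TV, let R : S¹ × I → ℝ, and define R_μ(s,t) := ∫_{S¹} R(s-x, t) dμ(x). Then for all 1 ≤ γ ≤ ρ and all rectangles [s,t]×[u,v] ⊆ S¹ × I: V_{γ,ρ}(R_μ; [s,t]×[u,v]) ≤ ‖μ‖_TV · sup_{x ∈ S¹} V_{γ,ρ}(R; [s-x,t-x]×[u,v]). -/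
open MeasureTheory

/-- Young-type inequality for mixed `(γ,ρ)`-variation under convolution with a finite signed
measure `μ = μp - μn` on the circle `S¹ = ℝ/2πℤ`:
`V_{γ,ρ}(R_μ;[s,t]×[u,v]) ≤ ‖μ‖_TV · sup_x V_{γ,ρ}(R;[s-x,t-x]×[u,v])`. -/
theorem stmt7 [Fact (0 < 2 * Real.pi)]
    (R : AddCircle (2 * Real.pi) → ℝ → ℝ)
    (hR : Continuous fun p : AddCircle (2 * Real.pi) × ℝ => R p.1 p.2)
    (μp μn : Measure (AddCircle (2 * Real.pi))) [IsFiniteMeasure μp] [IsFiniteMeasure μn]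
    (hsing : Measure.MutuallySingular μp μn)
    (Rμ : ℝ → ℝ → ℝ)
    (hRμ : ∀ s t : ℝ, Rμ s t
      = (∫ x, R ((s : AddCircle (2 * Real.pi)) - x) t ∂μp)
        - ∫ x, R ((s : AddCircle (2 * Real.pi)) - x) t ∂μn)
    (γ ρ : ℝ) (hγ : 1 ≤ γ) (hγρ : γ ≤ ρ)
    (s t u v : ℝ) (hst : s ≤ t) (huv : u ≤ v)
    (M : ℝ)
    -- `M` bounds the mixed variation of every shift `R(· - x, ·)` over `[s-x,t-x]×[u,v]`
    (hM : ∀ x : ℝ, ∀ (m : ℕ) (D : Fin (m + 1) → ℝ) (m' : ℕ) (D' : Fin (m' + 1) → ℝ),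
      Monotone D → D 0 = s - x → D (Fin.last m) = t - x →
      Monotone D' → D' 0 = u → D' (Fin.last m') = v →
      (∑ j : Fin m', (∑ i : Fin m,
          |R ((D i.castSucc : ℝ) : AddCircle (2 * Real.pi)) (D' j.castSucc)
            - R ((D i.castSucc : ℝ) : AddCircle (2 * Real.pi)) (D' j.succ)
            - R ((D i.succ : ℝ) : AddCircle (2 * Real.pi)) (D' j.castSucc)
            + R ((D i.succ : ℝ) : AddCircle (2 * Real.pi)) (D' j.succ)| ^ γ) ^ (ρ / γ))
        ^ (1 / ρ) ≤ M) :
    ∀ (m : ℕ) (D : Fin (m + 1) → ℝ) (m' : ℕ) (D' : Fin (m' + 1) → ℝ),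
      Monotone D → D 0 = s → D (Fin.last m) = t →
      Monotone D' → D' 0 = u → D' (Fin.last m') = v →
      (∑ j : Fin m', (∑ i : Fin m,
          |Rμ (D i.castSucc) (D' j.castSucc) - Rμ (D i.castSucc) (D' j.succ)
            - Rμ (D i.succ) (D' j.castSucc) + Rμ (D i.succ) (D' j.succ)| ^ γ) ^ (ρ / γ))
        ^ (1 / ρ)
        ≤ ((μp Set.univ + μn Set.univ).toReal) * M := by
  intro m D m' D' hD hD0 hDl hD' hD'0 hD'l
  have hγ0 : (0:ℝ) < γ := lt_of_lt_of_le one_pos hγ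
  have hρ1 : (1:ℝ) ≤ ρ := hγ.trans hγρ
  have hρ0 : (0:ℝ) < ρ := lt_of_lt_of_le one_pos hρ1
  haveI fγ : Fact (1 ≤ ENNReal.ofReal γ) := ⟨ENNReal.one_le_ofReal.mpr hγ⟩
  haveI fρ : Fact (1 ≤ ENNReal.ofReal ρ) := ⟨ENNReal.one_le_ofReal.mpr hρ1⟩
  set Eγ := PiLp (ENNReal.ofReal γ) (fun _ : Fin m => ℝ) with hEγ
  set E := PiLp (ENNReal.ofReal ρ) (fun _ : Fin m' => Eγ) with hE
  set Δ : AddCircle (2 * Real.pi) → Fin m' → Fin m → ℝ := fun x j i =>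
    R (((D i.castSucc : ℝ) : AddCircle (2 * Real.pi)) - x) (D' j.castSucc)
      - R (((D i.castSucc : ℝ) : AddCircle (2 * Real.pi)) - x) (D' j.succ)
      - R (((D i.succ : ℝ) : AddCircle (2 * Real.pi)) - x) (D' j.castSucc)
      + R (((D i.succ : ℝ) : AddCircle (2 * Real.pi)) - x) (D' j.succ) with hΔ
  set F : AddCircle (2 * Real.pi) → E := fun x =>
    (WithLp.equiv (ENNReal.ofReal ρ) _).symm fun j =>
      (WithLp.equiv (ENNReal.ofReal γ) _).symm fun i => Δ x j i with hF
  have hFapp : ∀ x j i, F x j i = Δ x j i := fun x j i => rfl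
  -- norm formula
  have hnorm : ∀ a : E, ‖a‖ = (∑ j, (∑ i, |a j i| ^ γ) ^ (ρ / γ)) ^ (1 / ρ) := by
    intro a
    have h1 : (0:ℝ) < (ENNReal.ofReal ρ).toReal := by
      rw [ENNReal.toReal_ofReal hρ0.le]; exact hρ0
    rw [PiLp.norm_eq_sum h1, ENNReal.toReal_ofReal hρ0.le]
    congr 1
    refine Finset.sum_congr rfl fun j _ => ?_
    have h2 : (0:ℝ) < (ENNReal.ofReal γ).toReal := by
      rw [ENNReal.toReal_ofReal hγ0.le]; exact hγ0
    rw [PiLp.norm_eq_sum h2, ENNReal.toReal_ofReal hγ0.le]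
    simp only [Real.norm_eq_abs]
    rw [← Real.rpow_mul (Finset.sum_nonneg fun i _ => Real.rpow_nonneg (abs_nonneg _) γ)]
    congr 1
    field_simp
  -- continuity
  have hRc : ∀ (c d : ℝ),
      Continuous fun x : AddCircle (2 * Real.pi) => R ((c : AddCircle (2 * Real.pi)) - x) d :=
    fun c d => hR.comp ((continuous_sub_left (c : AddCircle (2 * Real.pi))).prodMk continuous_const)
  have hΔc : ∀ j i, Continuous fun x => Δ x j i := fun j i =>
    (((hRc _ _).sub (hRc _ _)).sub (hRc _ _)).add (hRc _ _)
  have hFc : Continuous F := by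
    refine (PiLp.continuous_toLp _ _).comp ?_
    refine continuous_pi fun j => ?_
    exact (PiLp.continuous_toLp _ _).comp (continuous_pi fun i => hΔc j i)
  have hFint : ∀ (ν : Measure (AddCircle (2 * Real.pi))) [IsFiniteMeasure ν],
      Integrable F ν := fun ν _ =>
    hFc.integrable_of_hasCompactSupport (HasCompactSupport.of_compactSpace F)
  have hRint : ∀ (c d : ℝ) (ν : Measure (AddCircle (2 * Real.pi))) [IsFiniteMeasure ν],
      Integrable (fun x => R ((c : AddCircle (2 * Real.pi)) - x) d) ν := fun c d ν _ =>
    (hRc c d).integrable_of_hasCompactSupport (HasCompactSupport.of_compactSpace _)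
  -- componentwise integral
  have hcomp : ∀ (ν : Measure (AddCircle (2 * Real.pi))) [IsFiniteMeasure ν]
      (j : Fin m') (i : Fin m), (∫ x, F x ∂ν) j i = ∫ x, Δ x j i ∂ν := by
    intro ν _ j i
    set P : E →L[ℝ] ℝ := (PiLp.proj (ENNReal.ofReal γ) (fun _ : Fin m => ℝ) i).comp
        (PiLp.proj (ENNReal.ofReal ρ) (fun _ : Fin m' => Eγ) j) with hP
    calc (∫ x, F x ∂ν) j i = P (∫ x, F x ∂ν) := rfl
      _ = ∫ x, P (F x) ∂ν := (P.integral_comp_comm (hFint ν)).symm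
      _ = ∫ x, Δ x j i ∂ν := rfl
  have hIΔ : ∀ (ν : Measure (AddCircle (2 * Real.pi))) [IsFiniteMeasure ν]
      (j : Fin m') (i : Fin m),
      ∫ x, Δ x j i ∂ν
        = (∫ x, R (((D i.castSucc : ℝ) : AddCircle (2 * Real.pi)) - x) (D' j.castSucc) ∂ν)
          - (∫ x, R (((D i.castSucc : ℝ) : AddCircle (2 * Real.pi)) - x) (D' j.succ) ∂ν)
          - (∫ x, R (((D i.succ : ℝ) : AddCircle (2 * Real.pi)) - x) (D' j.castSucc) ∂ν)
          + ∫ x, R (((D i.succ : ℝ) : AddCircle (2 * Real.pi)) - x) (D' j.succ) ∂ν := by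
    intro ν _ j i
    have h1 : Integrable (fun x =>
        R (((D i.castSucc : ℝ) : AddCircle (2 * Real.pi)) - x) (D' j.castSucc)) ν := hRint _ _ ν
    have h2 : Integrable (fun x =>
        R (((D i.castSucc : ℝ) : AddCircle (2 * Real.pi)) - x) (D' j.succ)) ν := hRint _ _ ν
    have h3 : Integrable (fun x =>
        R (((D i.succ : ℝ) : AddCircle (2 * Real.pi)) - x) (D' j.castSucc)) ν := hRint _ _ ν
    have h4 : Integrable (fun x =>
        R (((D i.succ : ℝ) : AddCircle (2 * Real.pi)) - x) (D' j.succ)) ν := hRint _ _ ν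
    have h12 : Integrable (fun x =>
        R (((D i.castSucc : ℝ) : AddCircle (2 * Real.pi)) - x) (D' j.castSucc)
          - R (((D i.castSucc : ℝ) : AddCircle (2 * Real.pi)) - x) (D' j.succ)) ν := h1.sub h2
    have h123 : Integrable (fun x =>
        R (((D i.castSucc : ℝ) : AddCircle (2 * Real.pi)) - x) (D' j.castSucc)
          - R (((D i.castSucc : ℝ) : AddCircle (2 * Real.pi)) - x) (D' j.succ)
          - R (((D i.succ : ℝ) : AddCircle (2 * Real.pi)) - x) (D' j.castSucc)) ν := h12.sub h3
    simp only [hΔ]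
    rw [integral_add h123 h4, integral_sub h12 h3, integral_sub h1 h2]
  have key : ∀ (j : Fin m') (i : Fin m),
      Rμ (D i.castSucc) (D' j.castSucc) - Rμ (D i.castSucc) (D' j.succ)
        - Rμ (D i.succ) (D' j.castSucc) + Rμ (D i.succ) (D' j.succ)
        = ((∫ x, F x ∂μp) - (∫ x, F x ∂μn)) j i := by
    intro j i
    have h1 : ((∫ x, F x ∂μp) - (∫ x, F x ∂μn)) j i
        = (∫ x, F x ∂μp) j i - (∫ x, F x ∂μn) j i := rfl
    rw [h1, hcomp μp j i, hcomp μn j i, hIΔ μp j i, hIΔ μn j i, hRμ, hRμ, hRμ, hRμ]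
    ring
  -- pointwise bound on ‖F x‖
  have hFle : ∀ x, ‖F x‖ ≤ M := by
    intro x
    obtain ⟨x₀, rfl⟩ := QuotientAddGroup.mk_surjective x
    have hMx := hM x₀ m (fun i => D i - x₀) m' D'
      (fun a b hab => sub_le_sub_right (hD hab) x₀)
      (by show D 0 - x₀ = s - x₀; rw [hD0])
      (by show D (Fin.last m) - x₀ = t - x₀; rw [hDl]) hD' hD'0 hD'l
    rw [hnorm]
    refine le_trans (le_of_eq ?_) hMx
    have e : ∀ (c : ℝ), (((c - x₀ : ℝ)) : AddCircle (2 * Real.pi))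
        = ((c : ℝ) : AddCircle (2 * Real.pi)) - ((x₀ : ℝ) : AddCircle (2 * Real.pi)) :=
      fun c => by rw [QuotientAddGroup.mk_sub]
    refine congrArg (· ^ (1/ρ)) ?_
    refine Finset.sum_congr rfl fun j _ => ?_
    refine congrArg (· ^ (ρ/γ)) ?_
    refine Finset.sum_congr rfl fun i _ => ?_
    refine congrArg (· ^ γ) ?_
    refine congrArg abs ?_
    rw [hFapp]
    simp only [hΔ, e]
  -- conclude
  calc (∑ j : Fin m', (∑ i : Fin m,
          |Rμ (D i.castSucc) (D' j.castSucc) - Rμ (D i.castSucc) (D' j.succ)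
            - Rμ (D i.succ) (D' j.castSucc) + Rμ (D i.succ) (D' j.succ)| ^ γ) ^ (ρ / γ))
        ^ (1 / ρ)
      = ‖(∫ x, F x ∂μp) - (∫ x, F x ∂μn)‖ := by
        rw [hnorm]
        congr 1
        refine Finset.sum_congr rfl fun j _ => ?_
        congr 1
        refine Finset.sum_congr rfl fun i _ => ?_
        rw [key j i]
    _ ≤ ‖∫ x, F x ∂μp‖ + ‖∫ x, F x ∂μn‖ := norm_sub_le _ _
    _ ≤ (∫ x, ‖F x‖ ∂μp) + ∫ x, ‖F x‖ ∂μn :=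
        add_le_add (norm_integral_le_integral_norm _) (norm_integral_le_integral_norm _)
    _ ≤ (μp Set.univ).toReal * M + (μn Set.univ).toReal * M := by
        refine add_le_add ?_ ?_ <;>
        · refine le_trans (integral_mono (hFint _).norm (integrable_const M) hFle) ?_
          rw [integral_const, smul_eq_mul]; exact le_rfl
    _ = ((μp Set.univ + μn Set.univ).toReal) * M := by
        rw [ENNReal.toReal_add (measure_ne_top _ _) (measure_ne_top _ _)]
        ring
end

section
/- Let X be a centered Gaussian process on [0,T] with covariance R(s,t) = E[X_s X_t] such that all increments are non-positively correlated (E[X_{a,b} X_{c,d}] ≤ 0 for disjoint intervals [a,b], [c,d]) and E[X_{a,b} X_{0,T}] ≥ 0 for every [a,b] ⊆ [0,T]. Then for every finite linear combination Y = Σ_i a_i X_{t_i,t_{i+1}} over intervals disjoint from (s,t), one has E[|X_{s,t} - Y|²] ≥ R([s,t]×[0,T]), where R([s,t]×[0,T]) = E[X_{s,t} X_{0,T}] and X_{a,b} := X_b - X_a. -/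
open MeasureTheory ProbabilityTheory Finset

lemma matrix_key (m : ℕ) (G : ℕ → ℕ → ℝ) (S : Finset ℕ) (hS' : S ⊆ range m)
    (hsym : ∀ k l, G k l = G l k)
    (hoff : ∀ k ∈ range m, ∀ l ∈ range m, k ≠ l → G k l ≤ 0)
    (hrow : ∀ k ∈ range m, 0 ≤ ∑ l ∈ range m, G k l)
    (a : ℕ → ℝ) (ha : ∀ k ∈ S, a k = 1) :
    ∑ k ∈ S, ∑ l ∈ range m, G k l ≤
      ∑ k ∈ range m, ∑ l ∈ range m, a k * a l * G k l := by
  classical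
  set χ : ℕ → ℝ := fun k => if k ∈ S then 1 else 0 with hχ
  set b : ℕ → ℝ := fun k => a k - χ k with hb
  set cc : ℕ → ℝ := fun k => 1 - χ k with hcc
  have swap : ∀ f g : ℕ → ℝ,
      ∑ k ∈ range m, ∑ l ∈ range m, f k * g l * G k l
        = ∑ k ∈ range m, ∑ l ∈ range m, g k * f l * G k l := by
    intro f g
    rw [Finset.sum_comm]
    refine Finset.sum_congr rfl fun k _ => Finset.sum_congr rfl fun l _ => ?_
    rw [hsym l k]; ring
  have hb0 : ∀ k ∈ S, b k = 0 := by
    intro k hk; simp [hb, hχ, hk, ha k hk]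
  have hc0 : ∀ k ∈ S, cc k = 0 := by
    intro k hk; simp [hcc, hχ, hk]
  have hc1 : ∀ k, k ∉ S → cc k = 1 := by
    intro k hk; simp [hcc, hχ, hk]
  set u : ℕ → ℝ := fun k => ∑ l ∈ range m, χ l * G k l with hu
  set w : ℕ → ℝ := fun k => ∑ l ∈ range m, cc l * G k l with hw
  have huw : ∀ k ∈ range m, u k + w k = ∑ l ∈ range m, G k l := by
    intro k _
    rw [hu, hw]
    simp only [← Finset.sum_add_distrib]
    refine Finset.sum_congr rfl fun l _ => ?_
    simp [hcc]; ring
  have hune : ∀ k ∈ range m, k ∉ S → u k ≤ 0 := by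
    intro k hk hkS
    refine Finset.sum_nonpos fun l hl => ?_
    by_cases hlS : l ∈ S
    · have : k ≠ l := fun h => hkS (h ▸ hlS)
      have := hoff k hk l hl this
      simp [hχ, hlS]; linarith
    · simp [hχ, hlS]
  have hLHS : ∑ k ∈ S, ∑ l ∈ range m, G k l
      = (∑ k ∈ range m, ∑ l ∈ range m, χ k * χ l * G k l) + ∑ k ∈ range m, χ k * w k := by
    have h1 : ∑ k ∈ S, ∑ l ∈ range m, G k l
        = ∑ k ∈ range m, χ k * (u k + w k) := by
      rw [← Finset.inter_eq_right.mpr hS', ← Finset.sum_ite_mem]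
      refine Finset.sum_congr rfl fun k hk => ?_
      by_cases h : k ∈ S <;> simp [hχ, h, huw k hk]
    rw [h1]
    have h2 : ∀ k, χ k * (u k + w k)
        = (∑ l ∈ range m, χ k * χ l * G k l) + χ k * w k := by
      intro k
      rw [mul_add, hu, Finset.mul_sum]
      congr 1
      exact Finset.sum_congr rfl fun l _ => by ring
    simp only [h2]
    rw [Finset.sum_add_distrib]
  have hRHS : ∑ k ∈ range m, ∑ l ∈ range m, a k * a l * G k l
      = (∑ k ∈ range m, ∑ l ∈ range m, χ k * χ l * G k l)
        + 2 * ∑ k ∈ range m, b k * u k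
        + ∑ k ∈ range m, ∑ l ∈ range m, b k * b l * G k l := by
    have hsplit : ∀ k l : ℕ, a k * a l * G k l
        = χ k * χ l * G k l + χ k * b l * G k l + b k * χ l * G k l + b k * b l * G k l := by
      intro k l; simp only [hb]; ring
    simp_rw [hsplit, Finset.sum_add_distrib]
    have h1 : ∑ k ∈ range m, ∑ l ∈ range m, χ k * b l * G k l
        = ∑ k ∈ range m, ∑ l ∈ range m, b k * χ l * G k l := swap χ b
    have h2 : ∑ k ∈ range m, ∑ l ∈ range m, b k * χ l * G k l
        = ∑ k ∈ range m, b k * u k := by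
      refine Finset.sum_congr rfl fun k _ => ?_
      rw [hu, Finset.mul_sum]
      refine Finset.sum_congr rfl fun l _ => ?_; ring
    rw [h1, h2]; ring
  rw [hLHS, hRHS]
  have key : ∑ k ∈ range m, χ k * w k
      ≤ 2 * (∑ k ∈ range m, b k * u k) + ∑ k ∈ range m, ∑ l ∈ range m, b k * b l * G k l := by
    have hswap2 : ∑ k ∈ range m, χ k * w k = ∑ k ∈ range m, cc k * u k := by
      have e1 : ∑ k ∈ range m, χ k * w k
          = ∑ k ∈ range m, ∑ l ∈ range m, χ k * cc l * G k l := by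
        refine Finset.sum_congr rfl fun k _ => ?_
        rw [hw, Finset.mul_sum]; exact Finset.sum_congr rfl fun l _ => by ring
      rw [e1, swap χ cc]
      refine Finset.sum_congr rfl fun k _ => ?_
      rw [hu, Finset.mul_sum]; exact Finset.sum_congr rfl fun l _ => by ring
    rw [hswap2]
    have step1 : ∑ k ∈ range m, (b k)^2 * u k ≤ 2 * (∑ k ∈ range m, b k * u k)
        - ∑ k ∈ range m, cc k * u k := by
      rw [Finset.mul_sum, ← Finset.sum_sub_distrib]
      refine Finset.sum_le_sum fun k hk => ?_
      by_cases hkS : k ∈ S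
      · rw [hb0 k hkS, hc0 k hkS]; norm_num
      · have hu0 := hune k hk hkS
        rw [hc1 k hkS]
        nlinarith [sq_nonneg (b k - 1)]
    have step2 : - ∑ k ∈ range m, (b k)^2 * w k ≤ ∑ k ∈ range m, (b k)^2 * u k := by
      rw [neg_le_iff_add_nonneg, ← Finset.sum_add_distrib]
      refine Finset.sum_nonneg fun k hk => ?_
      have e : (b k)^2 * u k + (b k)^2 * w k = (b k)^2 * (∑ l ∈ range m, G k l) := by
        rw [← mul_add, huw k hk]
      rw [e]
      exact mul_nonneg (sq_nonneg _) (hrow k hk)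
    have step3 : ∑ k ∈ range m, (b k)^2 * w k
        ≤ ∑ k ∈ range m, ∑ l ∈ range m, b k * b l * G k l := by
      have hexp : ∑ k ∈ range m, (b k)^2 * w k
          = ∑ k ∈ range m, ∑ l ∈ range m, (b k)^2 * cc l * G k l := by
        refine Finset.sum_congr rfl fun k _ => ?_
        rw [hw, Finset.mul_sum]; exact Finset.sum_congr rfl fun l _ => by ring
      have hsw : ∑ k ∈ range m, ∑ l ∈ range m, (b k)^2 * cc l * G k l
          = ∑ k ∈ range m, ∑ l ∈ range m, (cc k) * (b l)^2 * G k l := by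
        have := swap (fun k => (b k)^2) cc
        simpa using this
      have hpt : 0 ≤ ∑ k ∈ range m, ∑ l ∈ range m,
          (2 * (b k * b l) - (b k)^2 * cc l - (b l)^2 * cc k) * G k l := by
        refine Finset.sum_nonneg fun k hk => Finset.sum_nonneg fun l hl => ?_
        by_cases hkl : k = l
        · subst hkl
          by_cases hkS : k ∈ S
          · rw [hb0 k hkS]; norm_num
          · rw [hc1 k hkS]
            have e : (2 * (b k * b k) - (b k)^2 * 1 - (b k)^2 * 1) = 0 := by ring
            rw [e, zero_mul]
        · have hG := hoff k hk l hl hkl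
          have hbr : (2 * (b k * b l) - (b k)^2 * cc l - (b l)^2 * cc k) ≤ 0 := by
            by_cases hkS : k ∈ S
            · rw [hb0 k hkS, hc0 k hkS]
              by_cases hlS : l ∈ S
              · rw [hb0 l hlS]; norm_num
              · rw [hc1 l hlS]; nlinarith [sq_nonneg (b l)]
            · by_cases hlS : l ∈ S
              · rw [hb0 l hlS, hc0 l hlS, hc1 k hkS]; nlinarith [sq_nonneg (b k)]
              · rw [hc1 k hkS, hc1 l hlS]
                nlinarith [sq_nonneg (b k - b l)]
          nlinarith [mul_nonneg (neg_nonneg.2 hbr) (neg_nonneg.2 hG)]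
      have hid : ∑ k ∈ range m, ∑ l ∈ range m,
          (2 * (b k * b l) - (b k)^2 * cc l - (b l)^2 * cc k) * G k l
          = 2 * (∑ k ∈ range m, ∑ l ∈ range m, b k * b l * G k l)
            - (∑ k ∈ range m, ∑ l ∈ range m, (b k)^2 * cc l * G k l)
            - (∑ k ∈ range m, ∑ l ∈ range m, (cc k) * (b l)^2 * G k l) := by
        rw [Finset.mul_sum, ← Finset.sum_sub_distrib, ← Finset.sum_sub_distrib]
        refine Finset.sum_congr rfl fun k _ => ?_
        rw [Finset.mul_sum, ← Finset.sum_sub_distrib, ← Finset.sum_sub_distrib]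
        refine Finset.sum_congr rfl fun l _ => ?_
        ring
      rw [hexp]
      linarith [hpt, hid.symm ▸ hpt, hsw]
    linarith
  linarith

lemma l2_mul_int {Ω : Type*} [MeasurableSpace Ω] (P : Measure Ω) (f g : Ω → ℝ)
    (hf : MemLp f 2 P) (hg : MemLp g 2 P) : Integrable (fun ω => f ω * g ω) P := by
  rw [← memLp_one_iff_integrable]
  have h := hg.smul (𝕜 := ℝ) hf (p := 2) (q := 2) (r := 1)
  exact h


/-- For a centered Gaussian process with non-positively correlated increments and
`E[X_{a,b}X_{0,T}] ≥ 0`, every approximation `Y` of `X_{s,t}` by linear combinations of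
increments over intervals disjoint from `(s,t)` satisfies
`E[|X_{s,t} - Y|²] ≥ E[X_{s,t}X_{0,T}]`. -/
theorem stmt13
    (T : ℝ) (hT : 0 < T)
    {Ω : Type*} [MeasurableSpace Ω] (P : Measure Ω) [IsProbabilityMeasure P]
    (X : ℝ → Ω → ℝ)
    (hX2 : ∀ t, MemLp (X t) 2 P)
    (hcent : ∀ t, ∫ ω, X t ω ∂P = 0)
    (hGauss : ∀ (n : ℕ) (c : Fin n → ℝ) (τ : Fin n → ℝ),
      ∃ v : NNReal, Measure.map (fun ω => ∑ i, c i * X (τ i) ω) P = gaussianReal 0 v)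
    -- non-positively correlated increments over disjoint intervals
    (hneg : ∀ a b c d : ℝ, 0 ≤ a → a ≤ b → b ≤ T → 0 ≤ c → c ≤ d → d ≤ T →
      (b ≤ c ∨ d ≤ a) → ∫ ω, (X b ω - X a ω) * (X d ω - X c ω) ∂P ≤ 0)
    (hpos : ∀ a b : ℝ, 0 ≤ a → a ≤ b → b ≤ T →
      0 ≤ ∫ ω, (X b ω - X a ω) * (X T ω - X 0 ω) ∂P) :
    ∀ s t : ℝ, 0 ≤ s → s ≤ t → t ≤ T →
      ∀ (n : ℕ) (c : Fin n → ℝ) (t₀ t₁ : Fin n → ℝ),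
        (∀ i, 0 ≤ t₀ i ∧ t₀ i ≤ t₁ i ∧ t₁ i ≤ T ∧ (t₁ i ≤ s ∨ t ≤ t₀ i)) →
        ∫ ω, (X t ω - X s ω) * (X T ω - X 0 ω) ∂P
          ≤ ∫ ω, (X t ω - X s ω - ∑ i, c i * (X (t₁ i) ω - X (t₀ i) ω)) ^ 2 ∂P := by
  intro s t hs hst htT n c t₀ t₁ hint
  classical
  set F : Finset ℝ :=
    (({0, s, t, T} : Finset ℝ) ∪ Finset.image t₀ Finset.univ) ∪ Finset.image t₁ Finset.univ
    with hF
  have h0F : (0:ℝ) ∈ F := by simp [hF]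
  have hTF : T ∈ F := by simp [hF]
  have hsF : s ∈ F := by simp [hF]
  have htF : t ∈ F := by simp [hF]
  have ht0F : ∀ i, t₀ i ∈ F := fun i => by
    simp only [hF, Finset.mem_union, Finset.mem_image]
    exact Or.inl (Or.inr ⟨i, Finset.mem_univ i, rfl⟩)
  have ht1F : ∀ i, t₁ i ∈ F := fun i => by
    simp only [hF, Finset.mem_union, Finset.mem_image]
    exact Or.inr ⟨i, Finset.mem_univ i, rfl⟩
  have hbound : ∀ x ∈ F, 0 ≤ x ∧ x ≤ T := by
    intro x hx
    simp only [hF, Finset.mem_union, Finset.mem_insert, Finset.mem_singleton,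
      Finset.mem_image] at hx
    rcases hx with ((rfl | rfl | rfl | rfl) | ⟨i, _, rfl⟩) | ⟨i, _, rfl⟩
    · exact ⟨le_refl 0, le_of_lt hT⟩
    · exact ⟨hs, le_trans hst htT⟩
    · exact ⟨le_trans hs hst, htT⟩
    · exact ⟨le_of_lt hT, le_rfl⟩
    · exact ⟨(hint i).1, le_trans (hint i).2.1 (hint i).2.2.1⟩
    · exact ⟨le_trans (hint i).1 (hint i).2.1, (hint i).2.2.1⟩
  set N : ℕ := F.card with hN
  have hN0 : 0 < N := Finset.card_pos.mpr ⟨0, h0F⟩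
  set iso := F.orderIsoOfFin hN.symm with hiso
  set p : ℕ → ℝ := fun k => if h : k < N then (iso ⟨k, h⟩ : ℝ) else T with hp
  have hpmem : ∀ k, k < N → p k ∈ F := by
    intro k h
    simp only [hp, dif_pos h]
    exact (iso ⟨k, h⟩).2
  have hplt : ∀ k l, (hk : k < N) → (hl : l < N) → k < l → p k < p l := by
    intro k l hk hl hkl
    simp only [hp, dif_pos hk, dif_pos hl]
    exact iso.lt_iff_lt.mpr hkl
  have hple : ∀ k l, (hk : k < N) → (hl : l < N) → k ≤ l → p k ≤ p l := by
    intro k l hk hl hkl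
    rcases eq_or_lt_of_le hkl with rfl | h
    · exact le_refl _
    · exact le_of_lt (hplt k l hk hl h)
  have hsurj : ∀ x, x ∈ F → ∃ k, ∃ h : k < N, p k = x := by
    intro x hx
    refine ⟨(iso.symm ⟨x, hx⟩ : Fin N), (iso.symm ⟨x, hx⟩).2, ?_⟩
    simp only [hp, dif_pos (iso.symm ⟨x, hx⟩).2]
    rw [show (⟨(iso.symm ⟨x, hx⟩ : Fin N), (iso.symm ⟨x, hx⟩).2⟩ : Fin N)
        = iso.symm ⟨x, hx⟩ from Fin.ext rfl]
    simp
  set m : ℕ := N - 1 with hm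
  have hmN : m < N := Nat.sub_lt hN0 one_pos
  have hlast : p m = T := by
    obtain ⟨j, hj, hpj⟩ := hsurj T hTF
    have hjm : j ≤ m := Nat.le_sub_one_of_lt hj
    have h1 : p j ≤ p m := hple j m hj hmN hjm
    have h2 : p m ≤ T := (hbound _ (hpmem m hmN)).2
    linarith [hpj ▸ h1]
  -- telescoping
  have tele : ∀ a b : ℝ, a ∈ F → b ∈ F → a ≤ b → ∀ ω,
      X b ω - X a ω = ∑ k ∈ range m,
        (if a ≤ p k ∧ p k < b then (1:ℝ) else 0) * (X (p (k+1)) ω - X (p k) ω) := by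
    intro a b haF hbF hab ω
    obtain ⟨i, hi, hpi⟩ := hsurj a haF
    obtain ⟨j, hj, hpj⟩ := hsurj b hbF
    have hij : i ≤ j := by
      by_contra h
      push_neg at h
      have := hplt j i hj hi h
      rw [hpi, hpj] at this
      linarith
    have hjm : j ≤ m := Nat.le_sub_one_of_lt hj
    have hfil : (range m).filter (fun k => a ≤ p k ∧ p k < b) = Finset.Ico i j := by
      ext k
      simp only [Finset.mem_filter, Finset.mem_range, Finset.mem_Ico]
      constructor
      · rintro ⟨hkm, hak, hkb⟩
        have hkN : k < N := lt_trans hkm hmN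
        constructor
        · by_contra h
          push_neg at h
          have := hplt k i hkN hi h
          rw [hpi] at this
          linarith
        · by_contra h
          push_neg at h
          have := hple j k hj hkN h
          rw [hpj] at this
          linarith
      · rintro ⟨hik, hkj⟩
        have hkm : k < m := lt_of_lt_of_le hkj hjm
        have hkN : k < N := lt_trans hkm hmN
        refine ⟨hkm, ?_, ?_⟩
        · rw [← hpi]; exact hple i k hi hkN hik
        · rw [← hpj]; exact hplt k j hkN hj hkj
    have hsum : ∑ k ∈ range m,
        (if a ≤ p k ∧ p k < b then (1:ℝ) else 0) * (X (p (k+1)) ω - X (p k) ω)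
        = ∑ k ∈ Finset.Ico i j, (X (p (k+1)) ω - X (p k) ω) := by
      rw [← hfil, Finset.sum_filter]
      refine Finset.sum_congr rfl fun k _ => ?_
      by_cases h : a ≤ p k ∧ p k < b <;> simp [h]
    rw [hsum, Finset.sum_Ico_eq_sub _ hij,
      Finset.sum_range_sub (fun k => X (p k) ω), Finset.sum_range_sub (fun k => X (p k) ω),
      hpi, hpj]
    ring
  -- edges
  set e : ℕ → Ω → ℝ := fun k ω => X (p (k+1)) ω - X (p k) ω with he
  have he2 : ∀ k, MemLp (e k) 2 P := fun k => (hX2 _).sub (hX2 _)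
  have hInt : ∀ k l, Integrable (fun ω => e k ω * e l ω) P :=
    fun k l => l2_mul_int P _ _ (he2 k) (he2 l)
  set Gm : ℕ → ℕ → ℝ := fun k l => ∫ ω, e k ω * e l ω ∂P with hGm
  have expand : ∀ α β : ℕ → ℝ,
      ∫ ω, (∑ k ∈ range m, α k * e k ω) * (∑ l ∈ range m, β l * e l ω) ∂P
        = ∑ k ∈ range m, ∑ l ∈ range m, α k * β l * Gm k l := by
    intro α β
    have h1 : ∀ ω, (∑ k ∈ range m, α k * e k ω) * (∑ l ∈ range m, β l * e l ω)
        = ∑ k ∈ range m, ∑ l ∈ range m, (α k * β l) * (e k ω * e l ω) := by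
      intro ω
      rw [Finset.sum_mul_sum]
      exact Finset.sum_congr rfl fun k _ => Finset.sum_congr rfl fun l _ => by ring
    simp_rw [h1]
    rw [integral_finset_sum _ (fun k _ => integrable_finset_sum _
      (fun l _ => (hInt k l).const_mul _))]
    refine Finset.sum_congr rfl fun k _ => ?_
    rw [integral_finset_sum _ (fun l _ => (hInt k l).const_mul _)]
    refine Finset.sum_congr rfl fun l _ => ?_
    rw [integral_const_mul, hGm]
  set S : Finset ℕ := (range m).filter (fun k => s ≤ p k ∧ p k < t) with hS
  set A : ℕ → ℝ := fun k => (if s ≤ p k ∧ p k < t then (1:ℝ) else 0)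
      - ∑ i, c i * (if t₀ i ≤ p k ∧ p k < t₁ i then (1:ℝ) else 0) with hA
  have hW : ∀ ω, X T ω - X 0 ω = ∑ k ∈ range m, (1:ℝ) * e k ω := by
    intro ω
    rw [tele 0 T h0F hTF (le_of_lt hT) ω]
    refine Finset.sum_congr rfl fun k hk => ?_
    have hkm : k < m := Finset.mem_range.mp hk
    have hkN : k < N := lt_trans hkm hmN
    have h0 : (0:ℝ) ≤ p k := (hbound _ (hpmem k hkN)).1
    have h1 : p k < T := by rw [← hlast]; exact hplt k m hkN hmN hkm
    rw [if_pos ⟨h0, h1⟩]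
  have hZY : ∀ ω, X t ω - X s ω - ∑ i, c i * (X (t₁ i) ω - X (t₀ i) ω)
      = ∑ k ∈ range m, A k * e k ω := by
    intro ω
    rw [tele s t hsF htF hst ω]
    have h2 : ∑ i, c i * (X (t₁ i) ω - X (t₀ i) ω)
        = ∑ k ∈ range m,
            (∑ i, c i * (if t₀ i ≤ p k ∧ p k < t₁ i then (1:ℝ) else 0)) * e k ω := by
      have e1 : ∑ i, c i * (X (t₁ i) ω - X (t₀ i) ω)
          = ∑ i, ∑ k ∈ range m,
              c i * ((if t₀ i ≤ p k ∧ p k < t₁ i then (1:ℝ) else 0) * e k ω) := by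
        refine Finset.sum_congr rfl fun i _ => ?_
        rw [tele (t₀ i) (t₁ i) (ht0F i) (ht1F i) (hint i).2.1 ω, Finset.mul_sum]
      rw [e1, Finset.sum_comm]
      refine Finset.sum_congr rfl fun k _ => ?_
      rw [Finset.sum_mul]
      exact Finset.sum_congr rfl fun i _ => by ring
    rw [h2, hA, ← Finset.sum_sub_distrib]
    refine Finset.sum_congr rfl fun k _ => by ring
  have hLHSint : ∫ ω, (X t ω - X s ω) * (X T ω - X 0 ω) ∂P
      = ∑ k ∈ S, ∑ l ∈ range m, Gm k l := by
    have e1 : (fun ω => (X t ω - X s ω) * (X T ω - X 0 ω))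
        = fun ω => (∑ k ∈ range m, (if s ≤ p k ∧ p k < t then (1:ℝ) else 0) * e k ω)
            * (∑ l ∈ range m, (1:ℝ) * e l ω) :=
      funext fun ω => by rw [tele s t hsF htF hst ω, hW ω]
    rw [e1, expand]
    have e2 : ∑ k ∈ range m, ∑ l ∈ range m,
        (if s ≤ p k ∧ p k < t then (1:ℝ) else 0) * 1 * Gm k l
        = ∑ k ∈ range m, (if s ≤ p k ∧ p k < t then (∑ l ∈ range m, Gm k l) else 0) := by
      refine Finset.sum_congr rfl fun k _ => ?_
      by_cases h : s ≤ p k ∧ p k < t <;> simp [h]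
    rw [e2, hS, ← Finset.sum_filter]
  have hRHSint : ∫ ω, (X t ω - X s ω - ∑ i, c i * (X (t₁ i) ω - X (t₀ i) ω))^2 ∂P
      = ∑ k ∈ range m, ∑ l ∈ range m, A k * A l * Gm k l := by
    have e1 : (fun ω => (X t ω - X s ω - ∑ i, c i * (X (t₁ i) ω - X (t₀ i) ω))^2)
        = fun ω => (∑ k ∈ range m, A k * e k ω) * (∑ l ∈ range m, A l * e l ω) :=
      funext fun ω => by rw [hZY ω]; ring
    rw [e1, expand]
  rw [hLHSint, hRHSint]
  refine matrix_key m Gm S (by rw [hS]; exact Finset.filter_subset _ _) ?_ ?_ ?_ A ?_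
  · -- symmetry
    intro k l
    rw [hGm]
    simp only
    rw [show (fun ω => e k ω * e l ω) = fun ω => e l ω * e k ω from
      funext fun ω => mul_comm _ _]
  · -- off-diagonal nonpositive
    intro k hk l hl hkl
    have hkm := Finset.mem_range.mp hk
    have hlm := Finset.mem_range.mp hl
    have hkN : k < N := lt_trans hkm hmN
    have hlN : l < N := lt_trans hlm hmN
    have hk1N : k + 1 < N := Nat.lt_of_le_of_lt (Nat.succ_le_of_lt hkm) hmN
    have hl1N : l + 1 < N := Nat.lt_of_le_of_lt (Nat.succ_le_of_lt hlm) hmN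
    refine hneg (p k) (p (k+1)) (p l) (p (l+1))
      (hbound _ (hpmem k hkN)).1 (hple k (k+1) hkN hk1N (Nat.le_succ k))
      (hbound _ (hpmem (k+1) hk1N)).2
      (hbound _ (hpmem l hlN)).1 (hple l (l+1) hlN hl1N (Nat.le_succ l))
      (hbound _ (hpmem (l+1) hl1N)).2 ?_
    rcases Nat.lt_or_ge k l with h | h
    · exact Or.inl (hple (k+1) l hk1N hlN h)
    · have hlk : l < k := lt_of_le_of_ne h (Ne.symm hkl)
      exact Or.inr (hple (l+1) k hl1N hkN hlk)
  · -- row sums nonneg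
    intro k hk
    have hkm := Finset.mem_range.mp hk
    have hkN : k < N := lt_trans hkm hmN
    have hk1N : k + 1 < N := Nat.lt_of_le_of_lt (Nat.succ_le_of_lt hkm) hmN
    have hsum : ∑ l ∈ range m, Gm k l = ∫ ω, e k ω * (X T ω - X 0 ω) ∂P := by
      rw [show (fun ω => e k ω * (X T ω - X 0 ω))
          = fun ω => ∑ l ∈ range m, e k ω * e l ω from funext fun ω => by
        rw [hW ω, Finset.mul_sum]
        exact Finset.sum_congr rfl fun l _ => by ring]
      rw [integral_finset_sum _ fun l _ => hInt k l]
    rw [hsum]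
    exact hpos (p k) (p (k+1)) (hbound _ (hpmem k hkN)).1
      (hple k (k+1) hkN hk1N (Nat.le_succ k)) (hbound _ (hpmem (k+1) hk1N)).2
  · -- A = 1 on S
    intro k hkS
    rw [hS] at hkS
    obtain ⟨hkR, hcond⟩ := Finset.mem_filter.mp hkS
    rw [hA]
    simp only
    rw [if_pos hcond]
    have hz : ∀ i : Fin n, (if t₀ i ≤ p k ∧ p k < t₁ i then (1:ℝ) else 0) = 0 := by
      intro i
      rw [if_neg]
      rintro ⟨h1, h2⟩
      rcases (hint i).2.2.2 with h | h
      · linarith [hcond.1]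
      · linarith [hcond.2]
    simp [hz]
end
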